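/- arXiv:2206.01032 — 2 statements merged into one kernel-verified Lean document; each statement's English description precedes it below -/
import Mathlib

section
/- (Equivalence theorem.) Let (S, τ) be a sequential abstract-state system over a language L with only function symbols, and assume additionally that for every state X ∈ S and every finite subset F of U there is an isomorphism from X onto some state X' ∈ S whose carrier is disjoint from F, and that Δ(X) is T-accessible for every original bounded-exploration witness T closed under subterms and every X ∈ S. Then (S, τ) has a finite new bounded-exploration witness if and only if it has a finite original bounded-exploration witness. -/
/-- A first-order language with only function symbols:
`Func n` is the set of `n`-ary function symbols. -/
structure Lang where
  Func : ℕ → Type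

/-- Closed terms of the language `L`. -/
inductive CTerm (L : Lang) : Type
  | app : ∀ {n : ℕ}, L.Func n → (Fin n → CTerm L) → CTerm L

/-- `CTerm.Subterm s t` means `s` is a subterm of `t`. -/
inductive CTerm.Subterm {L : Lang} : CTerm L → CTerm L → Prop
  | refl (t : CTerm L) : CTerm.Subterm t t
  | app {n : ℕ} (f : L.Func n) (ts : Fin n → CTerm L) (i : Fin n) {s : CTerm L} :
      CTerm.Subterm s (ts i) → CTerm.Subterm s (CTerm.app f ts)

/-- A set of closed terms is closed under subterms. -/
def SubtermClosed {L : Lang} (T : Set (CTerm L)) : Prop :=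
  ∀ s t : CTerm L, CTerm.Subterm s t → t ∈ T → s ∈ T

/-- A state: an `L`-structure whose carrier is a subset of `U`.
Function symbols are interpreted as operations mapping carrier elements
to carrier elements. -/
structure State (L : Lang) (U : Type*) where
  carrier : Set U
  interp : ∀ {n : ℕ}, L.Func n → (Fin n → U) → U
  interp_mem : ∀ {n : ℕ} (f : L.Func n) (x : Fin n → U),
    (∀ i, x i ∈ carrier) → interp f x ∈ carrier

/-- The value `V_X(t)` of a closed term `t` in the state `X`. -/
def State.val {L : Lang} {U : Type*} (X : State L U) : CTerm L → U
  | .app f ts => X.interp f (fun i => X.val (ts i))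

/-- `ξ` is an isomorphism from state `X` onto state `Y`. -/
def IsIso {L : Lang} {U : Type*} (ξ : U → U) (X Y : State L U) : Prop :=
  Set.BijOn ξ X.carrier Y.carrier ∧
  ∀ {n : ℕ} (f : L.Func n) (x : Fin n → U), (∀ i, x i ∈ X.carrier) →
    ξ (X.interp f x) = Y.interp f (fun i => ξ (x i))

/-- A sequential abstract-state system `(S, τ)`. -/
structure ASM (L : Lang) (U : Type*) where
  S : Set (State L U)
  nonempty : S.Nonempty
  τ : State L U → State L U
  mapsTo : ∀ X ∈ S, τ X ∈ S
  carrier_τ : ∀ X ∈ S, (τ X).carrier = X.carrier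
  closedIso : ∀ X ∈ S, ∀ (Y : State L U) (ξ : U → U), IsIso ξ X Y → Y ∈ S
  isoτ : ∀ X ∈ S, ∀ Y ∈ S, ∀ ξ : U → U, IsIso ξ X Y → IsIso ξ (τ X) (τ Y)

/-- An update `(f, (x_1, …, x_j), x_0)`. -/
structure Update (L : Lang) (U : Type*) where
  arity : ℕ
  f : L.Func arity
  args : Fin arity → U
  val : U

/-- `u` is an update of the state `X` (in the system `A`): all its components are
in the carrier of `X` and the interpretation of `u.f` in `τ(X)` maps `u.args` to `u.val`. -/
def IsUpd {L : Lang} {U : Type*} (A : ASM L U) (X : State L U) (u : Update L U) : Prop :=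
  (∀ i, u.args i ∈ X.carrier) ∧ u.val ∈ X.carrier ∧ (A.τ X).interp u.f u.args = u.val

/-- `Δ A X` : the set of nontrivial updates of `X`. -/
def Δ {L : Lang} {U : Type*} (A : ASM L U) (X : State L U) : Set (Update L U) :=
  {u | IsUpd A X u ∧ X.interp u.f u.args ≠ u.val}

/-- States `X` and `Y` coincide over the set `T` of closed terms. -/
def Coincide {L : Lang} {U : Type*} (T : Set (CTerm L)) (X Y : State L U) : Prop :=
  ∀ t ∈ T, X.val t = Y.val t

/-- States `X` and `Y` are `T`-similar. -/
def TSimilar {L : Lang} {U : Type*} (T : Set (CTerm L)) (X Y : State L U) : Prop :=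
  ∀ s ∈ T, ∀ t ∈ T, (X.val s = X.val t ↔ Y.val s = Y.val t)

/-- `σ` is (an extension of) the similarity function from `V_X(T)` to `V_Y(T)`:
`σ(V_X(t)) = V_Y(t)` for all `t ∈ T`. -/
def SimFun {L : Lang} {U : Type*} (T : Set (CTerm L)) (X Y : State L U) (σ : U → U) : Prop :=
  ∀ t ∈ T, σ (X.val t) = Y.val t

/-- An element `x` of `X` is `T`-accessible. -/
def AccElem {L : Lang} {U : Type*} (T : Set (CTerm L)) (X : State L U) (x : U) : Prop :=
  ∃ t ∈ T, X.val t = x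

/-- An update is `T`-accessible if all its element components are `T`-accessible. -/
def AccUpd {L : Lang} {U : Type*} (T : Set (CTerm L)) (X : State L U) (u : Update L U) : Prop :=
  AccElem T X u.val ∧ ∀ i, AccElem T X (u.args i)

/-- A set of updates of `X` is `T`-accessible. -/
def AccSet {L : Lang} {U : Type*} (T : Set (CTerm L)) (X : State L U)
    (D : Set (Update L U)) : Prop :=
  ∀ u ∈ D, AccUpd T X u

/-- The action of a function `σ` on an update:
`σ(f, (x_1, …, x_j), x_0) = (f, (σx_1, …, σx_j), σx_0)`. -/
def Update.map {L : Lang} {U : Type*} (σ : U → U) (u : Update L U) : Update L U :=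
  ⟨u.arity, u.f, fun i => σ (u.args i), σ u.val⟩

/-- `T` is an original bounded-exploration witness for `A`. -/
def OrigWitness {L : Lang} {U : Type*} (A : ASM L U) (T : Set (CTerm L)) : Prop :=
  ∀ X ∈ A.S, ∀ Y ∈ A.S, Coincide T X Y → Δ A X = Δ A Y

/-- `T` is a new bounded-exploration witness for `A`. -/
def NewWitness {L : Lang} {U : Type*} (A : ASM L U) (T : Set (CTerm L)) : Prop :=
  SubtermClosed T ∧
  (∀ X ∈ A.S, AccSet T X (Δ A X)) ∧
  (∀ X ∈ A.S, ∀ Y ∈ A.S, TSimilar T X Y → ∀ σ : U → U, SimFun T X Y σ →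
    ∀ u : Update L U, IsUpd A X u → AccUpd T X u →
      (u ∈ Δ A X ↔ Update.map σ u ∈ Δ A Y))


section Aux

variable {L : Lang} {U : Type*}

lemma val_mem (X : State L U) : ∀ t : CTerm L, X.val t ∈ X.carrier
  | .app f ts => X.interp_mem f _ (fun i => val_mem X (ts i))

lemma subterm_trans {L : Lang} {t r : CTerm L} (h2 : CTerm.Subterm t r) :
    ∀ {s : CTerm L}, CTerm.Subterm s t → CTerm.Subterm s r := by
  induction h2 with
  | refl t => exact fun h => h
  | app f ts i h ih => exact fun h1 => .app f ts i (ih h1)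

lemma subterm_finite : ∀ t : CTerm L, {s : CTerm L | CTerm.Subterm s t}.Finite
  | .app f ts => by
    have hsub : {s : CTerm L | CTerm.Subterm s (.app f ts)} ⊆
        insert (CTerm.app f ts) (⋃ i, {s | CTerm.Subterm s (ts i)}) := by
      intro s hs
      cases hs with
      | refl => exact Set.mem_insert _ _
      | app f ts i h =>
        exact Set.mem_insert_of_mem _ (Set.mem_iUnion.mpr ⟨i, h⟩)
    exact Set.Finite.subset
      ((Set.finite_iUnion fun i => subterm_finite (ts i)).insert _) hsub

lemma val_iso {ξ : U → U} {X Y : State L U} (h : IsIso ξ X Y) :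
    ∀ t : CTerm L, Y.val t = ξ (X.val t)
  | .app f ts => by
    show Y.interp f (fun i => Y.val (ts i)) = ξ (X.interp f (fun i => X.val (ts i)))
    have harg : (fun i => Y.val (ts i)) = fun i => ξ (X.val (ts i)) :=
      funext fun i => val_iso h (ts i)
    rw [harg, h.2 f (fun i => X.val (ts i)) (fun i => val_mem X (ts i))]

lemma iso_comp {ξ η : U → U} {X Y Z : State L U}
    (h1 : IsIso ξ X Y) (h2 : IsIso η Y Z) : IsIso (fun x => η (ξ x)) X Z := by
  refine ⟨h2.1.comp h1.1, ?_⟩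
  intro n f x hx
  show η (ξ (X.interp f x)) = Z.interp f fun i => η (ξ (x i))
  rw [h1.2 f x hx, h2.2 f (fun i => ξ (x i)) (fun i => h1.1.1 (hx i))]

lemma iso_delta (A : ASM L U) {X Z : State L U} (hX : X ∈ A.S) (hZ : Z ∈ A.S)
    {ζ : U → U} (hiso : IsIso ζ X Z) (u : Update L U)
    (ha : ∀ i, u.args i ∈ X.carrier) (hv : u.val ∈ X.carrier) :
    u ∈ Δ A X ↔ Update.map ζ u ∈ Δ A Z := by
  have hτ := A.isoτ X hX Z hZ ζ hiso
  have hcX := A.carrier_τ X hX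
  have hinj : Set.InjOn ζ X.carrier := hiso.1.2.1
  have haτ : ∀ i, u.args i ∈ (A.τ X).carrier := fun i => hcX ▸ ha i
  have hint : (A.τ X).interp u.f u.args ∈ X.carrier :=
    hcX ▸ (A.τ X).interp_mem u.f u.args haτ
  have hop : (A.τ Z).interp u.f (fun i => ζ (u.args i)) = ζ ((A.τ X).interp u.f u.args) :=
    (hτ.2 u.f u.args haτ).symm
  have hop0 : Z.interp u.f (fun i => ζ (u.args i)) = ζ (X.interp u.f u.args) :=
    (hiso.2 u.f u.args ha).symm
  have hintX : X.interp u.f u.args ∈ X.carrier := X.interp_mem u.f u.args ha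
  simp only [Δ, Set.mem_setOf_eq, IsUpd, Update.map]
  constructor
  · rintro ⟨⟨_, _, heq⟩, hne⟩
    refine ⟨⟨fun i => hiso.1.1 (ha i), hiso.1.1 hv, ?_⟩, ?_⟩
    · rw [hop, heq]
    · rw [hop0]
      exact fun h => hne (hinj hintX hv h)
  · rintro ⟨⟨_, _, heq⟩, hne⟩
    rw [hop] at heq
    rw [hop0] at hne
    refine ⟨⟨ha, hv, hinj hint hv heq⟩, fun h => hne (by rw [h])⟩

end Aux

/-- equivalence theorem: assume that every state has an isomorphic
copy in `S` whose carrier avoids any given finite subset of `U`, and that `Δ(X)`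
is `T`-accessible for every subterm-closed original bounded-exploration witness `T`
and every state `X`.  Then the system has a finite new bounded-exploration witness
if and only if it has a finite original bounded-exploration witness. -/
theorem new_witness_iff_orig_witness
    {L : Lang} {U : Type*} (A : ASM L U)
    (hfresh : ∀ X ∈ A.S, ∀ F : Set U, F.Finite →
      ∃ X' ∈ A.S, (∃ ξ : U → U, IsIso ξ X X') ∧ Disjoint X'.carrier F)
    (hacc : ∀ T : Set (CTerm L), SubtermClosed T → OrigWitness A T →
      ∀ X ∈ A.S, AccSet T X (Δ A X)) :
    (∃ T : Set (CTerm L), T.Finite ∧ NewWitness A T) ↔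
      (∃ T : Set (CTerm L), T.Finite ∧ OrigWitness A T) := by
    classical
  constructor
  · -- new witness → original witness
    rintro ⟨T, hfin, hclosed, haccT, hmain⟩
    refine ⟨T, hfin, ?_⟩
    intro X hX Y hY hco
    have hsim : TSimilar T X Y := fun s hs t ht => by rw [hco s hs, hco t ht]
    have hsim' : TSimilar T Y X := fun s hs t ht => (hsim s hs t ht).symm
    have hσ : SimFun T X Y id := fun t ht => hco t ht
    have hσ' : SimFun T Y X id := fun t ht => (hco t ht).symm
    ext u
    have hid : Update.map id u = u := rfl
    constructor
    · intro hu
      have h2 := (hmain X hX Y hY hsim id hσ u hu.1 (haccT X hX u hu)).mp hu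
      rwa [hid] at h2
    · intro hu
      have h2 := (hmain Y hY X hX hsim' id hσ' u hu.1 (haccT Y hY u hu)).mp hu
      rwa [hid] at h2
  · -- original witness → new witness
    rintro ⟨T, hTfin, hTorig⟩
    set T' : Set (CTerm L) := ⋃ t ∈ T, {s | CTerm.Subterm s t} with hT'def
    have hfin' : T'.Finite := hTfin.biUnion fun t _ => subterm_finite t
    have hsubT : T ⊆ T' := fun t ht => Set.mem_biUnion ht (CTerm.Subterm.refl t)
    have hclosed : SubtermClosed T' := by
      intro s t hst ht
      simp only [hT'def, Set.mem_iUnion, Set.mem_setOf_eq] at ht ⊢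
      obtain ⟨r, hr, htr⟩ := ht
      exact ⟨r, hr, subterm_trans htr hst⟩
    have horig' : OrigWitness A T' := fun X hX Y hY hco =>
      hTorig X hX Y hY fun t ht => hco t (hsubT ht)
    refine ⟨T', hfin', hclosed, hacc T' hclosed horig', ?_⟩
    intro X hX Y hY hsim σ hσ u hupd haccu
    rcases isEmpty_or_nonempty U with hU | hU
    · exact (hU.false u.val).elim
    obtain ⟨X', hX', ⟨ξ, hξ⟩, hdisj⟩ :=
      hfresh X hX (Y.val '' T') (hfin'.image _)
    let η : U → U := fun x => if h : ∃ s ∈ T', X'.val s = x then Y.val h.choose else x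
    have hη_spec : ∀ t ∈ T', η (X'.val t) = Y.val t := by
      intro t ht
      have hex : ∃ s ∈ T', X'.val s = X'.val t := ⟨t, ht, rfl⟩
      have hd : η (X'.val t) = Y.val hex.choose := dif_pos hex
      rw [hd]
      obtain ⟨hc1, hc2⟩ := hex.choose_spec
      have hx : X.val hex.choose = X.val t :=
        hξ.1.2.1 (val_mem X _) (val_mem X _)
          (by rw [← val_iso hξ, ← val_iso hξ, hc2])
      exact (hsim _ hc1 t ht).mp hx
    have hη_not : ∀ x, ¬(∃ s ∈ T', X'.val s = x) → η x = x := fun x hx => dif_neg hx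
    have hηinj : Set.InjOn η X'.carrier := by
      intro a ha b hb hab
      by_cases h1 : ∃ s ∈ T', X'.val s = a
      · obtain ⟨s, hs, rfl⟩ := h1
        by_cases h2 : ∃ s ∈ T', X'.val s = b
        · obtain ⟨t, ht, rfl⟩ := h2
          rw [hη_spec s hs, hη_spec t ht] at hab
          have hx : X.val s = X.val t := (hsim s hs t ht).mpr hab
          rw [val_iso hξ s, val_iso hξ t, hx]
        · exfalso
          rw [hη_not b h2, hη_spec s hs] at hab
          exact Set.disjoint_left.mp hdisj hb ⟨s, hs, hab⟩
      · by_cases h2 : ∃ s ∈ T', X'.val s = b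
        · obtain ⟨t, ht, rfl⟩ := h2
          exfalso
          rw [hη_not a h1, hη_spec t ht] at hab
          exact Set.disjoint_left.mp hdisj ha ⟨t, ht, hab.symm⟩
        · rw [hη_not a h1, hη_not b h2] at hab
          exact hab
    let g : U → U := Function.invFunOn η X'.carrier
    have hg : ∀ x ∈ X'.carrier, g (η x) = x := fun x hx => hηinj.leftInvOn_invFunOn hx
    have hgmem : ∀ y ∈ η '' X'.carrier, g y ∈ X'.carrier := fun y hy =>
      Function.invFunOn_mem hy
    let Z : State L U :=
      { carrier := η '' X'.carrier
        interp := fun {n} f x => η (X'.interp f (fun i => g (x i)))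
        interp_mem := fun {n} f x hx =>
          ⟨X'.interp f (fun i => g (x i)),
            X'.interp_mem f _ (fun i => hgmem _ (hx i)), rfl⟩ }
    have hηZ : IsIso η X' Z := by
      refine ⟨⟨Set.mapsTo_image η _, hηinj, Set.surjOn_image η _⟩, ?_⟩
      intro n f x hx
      show η (X'.interp f x) = η (X'.interp f (fun i => g (η (x i))))
      have harg : (fun i => g (η (x i))) = x := funext fun i => hg (x i) (hx i)
      rw [harg]
    have hZS : Z ∈ A.S := A.closedIso X' hX' Z η hηZ
    have hcoin : Coincide T' Z Y := fun t ht => by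
      rw [val_iso hηZ t, hη_spec t ht]
    have hΔZY : Δ A Z = Δ A Y := horig' Z hZS Y hY hcoin
    have hζ : IsIso (fun x => η (ξ x)) X Z := iso_comp hξ hηZ
    have h1 := iso_delta A hX hZS hζ u hupd.1 hupd.2.1
    have hcomp : ∀ x, (∃ t ∈ T', X.val t = x) → η (ξ x) = σ x := by
      rintro x ⟨t, ht, rfl⟩
      rw [hσ t ht, ← val_iso hξ t]
      exact hη_spec t ht
    have hmap : Update.map σ u = Update.map (fun x => η (ξ x)) u := by
      simp only [Update.map]
      rw [show (fun i => σ (u.args i)) = (fun i => η (ξ (u.args i))) from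
            funext fun i => (hcomp _ (haccu.2 i)).symm,
          (hcomp _ haccu.1).symm]
    rw [hmap, ← hΔZY]
    exact h1
end

section
/- (Case 1 of the if-direction proof.) Let (S, τ) be a sequential abstract-state system over a language L with only function symbols, closed under isomorphism in the following strong sense: for every X ∈ S and every bijection from the carrier of X onto a subset of U, the pushed-forward structure belongs to S. Let T be a finite set of closed L-terms, closed under subterms, that is an original bounded-exploration witness. Suppose X, Y ∈ S are T-similar, V_X(T) ∩ V_Y(T) = ∅, σ is the similarity function, the closed terms t_0 and f(t_1, …, t_j) belong to T, x_i = V_X(t_i) and y_i = V_Y(t_i) for i = 0, 1, …, j. If (f, (x_1, …, x_j), x_0) ∈ Δ(X), then (f, (y_1, …, y_j), y_0) ∈ Δ(Y). -/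
/-- Values of closed terms lie in the carrier. -/
theorem val_mem_carrier {L : Lang} {U : Type*} (X : State L U) :
    ∀ t : CTerm L, X.val t ∈ X.carrier
  | .app f ts => X.interp_mem f _ (fun i => val_mem_carrier X (ts i))

/-- Isomorphisms transport term values. -/
theorem iso_val {L : Lang} {U : Type*} {ξ : U → U} {X Z : State L U}
    (h : IsIso ξ X Z) : ∀ t : CTerm L, ξ (X.val t) = Z.val t
  | .app f ts => by
    show ξ (X.interp f fun i => X.val (ts i)) = Z.interp f fun i => Z.val (ts i)
    rw [h.2 f _ (fun i => val_mem_carrier X (ts i))]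
    exact congrArg _ (funext fun i => iso_val h (ts i))

/-- Case 1 of the if-direction proof: assume the strong closure
under isomorphism (any pushed-forward copy of a state in `S` along an injection
of its carrier into `U` belongs to `S`).  Let `T` be a finite subterm-closed
original bounded-exploration witness, let `X, Y ∈ S` be `T`-similar with
`V_X(T) ∩ V_Y(T) = ∅` and similarity function `σ`, and let the closed terms
`t_0` and `f(t_1, …, t_j)` belong to `T`.  If `(f, (x_1, …, x_j), x_0) ∈ Δ(X)`,
then `(f, (y_1, …, y_j), y_0) ∈ Δ(Y)`, where `x_i = V_X(t_i)`, `y_i = V_Y(t_i)`. -/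
theorem case_one_disjoint_values
    {L : Lang} {U : Type*} (A : ASM L U)
    (hstrong : ∀ X ∈ A.S, ∀ g : U → U, Set.InjOn g X.carrier →
      ∃ X' ∈ A.S, IsIso g X X')
    (T : Set (CTerm L)) (hfin : T.Finite) (hsub : SubtermClosed T)
    (horig : OrigWitness A T)
    (X Y : State L U) (hX : X ∈ A.S) (hY : Y ∈ A.S)
    (hsim : TSimilar T X Y)
    (hdisj : Disjoint (X.val '' T) (Y.val '' T))
    (σ : U → U) (hσ : SimFun T X Y σ)
    {j : ℕ} (f : L.Func j) (ts : Fin j → CTerm L) (t0 : CTerm L)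
    (ht0 : t0 ∈ T) (htf : CTerm.app f ts ∈ T)
    (hu : (⟨j, f, fun i => X.val (ts i), X.val t0⟩ : Update L U) ∈ Δ A X) :
    (⟨j, f, fun i => Y.val (ts i), Y.val t0⟩ : Update L U) ∈ Δ A Y := by
  classical
  -- the swapping map ζ
  set ζ : U → U := fun a =>
    if h : ∃ t ∈ T, Y.val t = a then X.val h.choose
    else if h' : ∃ t ∈ T, X.val t = a then Y.val h'.choose
    else a with hζdef
  have hnotY : ∀ t ∈ T, ¬ ∃ s ∈ T, Y.val s = X.val t := by
    rintro t ht ⟨s, hs, hse⟩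
    exact Set.disjoint_left.mp hdisj ⟨t, ht, rfl⟩ ⟨s, hs, hse⟩
  have hζY : ∀ t ∈ T, ζ (Y.val t) = X.val t := by
    intro t ht
    have h : ∃ s ∈ T, Y.val s = Y.val t := ⟨t, ht, rfl⟩
    simp only [hζdef, dif_pos h]
    have hc := h.choose_spec
    exact (hsim _ hc.1 t ht).mpr hc.2
  have hζX : ∀ t ∈ T, ζ (X.val t) = Y.val t := by
    intro t ht
    have h' : ∃ s ∈ T, X.val s = X.val t := ⟨t, ht, rfl⟩
    simp only [hζdef, dif_neg (hnotY t ht), dif_pos h']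
    have hc := h'.choose_spec
    exact (hsim _ hc.1 t ht).mp hc.2
  have hinv : ∀ a, ζ (ζ a) = a := by
    intro a
    by_cases h : ∃ t ∈ T, Y.val t = a
    · obtain ⟨t, ht, rfl⟩ := h
      rw [hζY t ht, hζX t ht]
    · by_cases h' : ∃ t ∈ T, X.val t = a
      · obtain ⟨t, ht, rfl⟩ := h'
        rw [hζX t ht, hζY t ht]
      · have : ζ a = a := by simp only [hζdef, dif_neg h, dif_neg h']
        rw [this, this]
  have hζinj : Function.Injective ζ := Function.LeftInverse.injective hinv
  -- push Y forward along ζ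
  obtain ⟨Z, hZ, hiso⟩ := hstrong Y hY ζ hζinj.injOn
  -- Z coincides with X on T
  have hco : Coincide T X Z := by
    intro t ht
    rw [← iso_val hiso t, hζY t ht]
  have hΔ : Δ A X = Δ A Z := horig X hX Z hZ hco
  have huZ : (⟨j, f, fun i => X.val (ts i), X.val t0⟩ : Update L U) ∈ Δ A Z :=
    hΔ ▸ hu
  have hisoτ : IsIso ζ (A.τ Y) (A.τ Z) := A.isoτ Y hY Z hZ ζ hiso
  constructor
  · refine ⟨fun i => val_mem_carrier Y (ts i), val_mem_carrier Y t0, ?_⟩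
    apply hζinj
    have hmem : ∀ i, Y.val (ts i) ∈ (A.τ Y).carrier := by
      rw [A.carrier_τ Y hY]; exact fun i => val_mem_carrier Y (ts i)
    have := hisoτ.2 f (fun i => Y.val (ts i)) hmem
    rw [show (⟨j, f, fun i => Y.val (ts i), Y.val t0⟩ : Update L U).f = f from rfl] at *
    calc ζ ((A.τ Y).interp f fun i => Y.val (ts i))
        = (A.τ Z).interp f (fun i => ζ (Y.val (ts i))) := this
      _ = (A.τ Z).interp f (fun i => X.val (ts i)) := by
          exact congrArg _ (funext fun i => hζY (ts i) (hsub (ts i) _ (.app f ts i (.refl _)) htf))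
      _ = X.val t0 := huZ.1.2.2
      _ = ζ (Y.val t0) := (hζY t0 ht0).symm
  · intro hcontra
    have hYeq : Y.val (CTerm.app f ts) = Y.val t0 := hcontra
    have hXeq : X.val (CTerm.app f ts) = X.val t0 := (hsim _ htf t0 ht0).mpr hYeq
    exact hu.2 hXeq
end
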